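/- arXiv:2202.12644 — 2 statements merged into one kernel-verified Lean document; each statement's English description precedes it below -/
import Mathlib

section
/- Let B be a d×d strictly lower triangular random matrix and V a diagonal random matrix with diagonal entries ν_1,…,ν_d, with B and V independent and all second moments finite. Then E[(I_d - B)^T V (I_d - B)] = (I_d - E[B])^T E[V] (I_d - E[B]) + C, where C is the symmetric d×d matrix with entries C_{i,j} = Σ_{k=max(i,j)+1}^{d} Cov(β_{k,i}, β_{k,j}) E[ν_k], and β_{k,i} denotes the (k,i) entry of B. -/
open MeasureTheory Matrix ProbabilityTheory

private lemma entry_formula {d : ℕ} (M : Matrix (Fin d) (Fin d) ℝ) (v : Fin d → ℝ)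
    (i j : Fin d) :
    ((1 - M)ᵀ * Matrix.diagonal v * (1 - M) : Matrix (Fin d) (Fin d) ℝ) i j
      = ∑ k, (((if k = i then (1:ℝ) else 0) - M k i)
          * ((if k = j then (1:ℝ) else 0) - M k j)) * v k := by
  simp [Matrix.mul_apply, Matrix.diagonal_apply, mul_ite, ite_mul, zero_mul, mul_zero,
    Finset.sum_ite_eq', Matrix.one_apply]
  apply Finset.sum_congr rfl
  intro k _
  by_cases h : i = k <;> simp [h, eq_comm] <;> ring

/-- For a strictly lower triangular random matrix `B` independent of the
diagonal random matrix `V = diag(ν)`, `E[(I-B)ᵀ V (I-B)] = (I-E B)ᵀ (E V) (I-E B) + C`,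
where `C i j = ∑_{k > max i j} Cov(β_{k,i}, β_{k,j}) E[ν_k]`. -/
theorem expectation_IminusB_V_IminusB
    {α : Type*} [MeasurableSpace α] (P : Measure α) [IsProbabilityMeasure P]
    (d : ℕ) (B : α → Fin d → Fin d → ℝ) (ν : α → Fin d → ℝ)
    (hstrict : ∀ ω (k i : Fin d), k ≤ i → B ω k i = 0)
    (hindep : IndepFun B ν P)
    (hintB : ∀ i j, Integrable (fun ω => B ω i j) P)
    (hintν : ∀ k, Integrable (fun ω => ν ω k) P)
    (hintBB : ∀ i j k, Integrable (fun ω => B ω k i * B ω k j) P)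
    (hintBBν : ∀ i j k, Integrable (fun ω => B ω k i * B ω k j * ν ω k) P)
    (EB : Matrix (Fin d) (Fin d) ℝ) (hEB : ∀ i j, EB i j = ∫ ω, B ω i j ∂P)
    (Eν : Fin d → ℝ) (hEν : ∀ k, Eν k = ∫ ω, ν ω k ∂P)
    (C : Matrix (Fin d) (Fin d) ℝ)
    (hC : ∀ i j, C i j =
        ∑ k ∈ Finset.filter (fun k => max i j < k) Finset.univ,
          ((∫ ω, B ω k i * B ω k j ∂P) - EB k i * EB k j) * Eν k) :
    ∀ i j : Fin d, ∫ ω, ((1 - Matrix.of (B ω))ᵀ * Matrix.diagonal (ν ω)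
        * (1 - Matrix.of (B ω)) : Matrix (Fin d) (Fin d) ℝ) i j ∂P
      = ((1 - EB)ᵀ * Matrix.diagonal Eν * (1 - EB) : Matrix (Fin d) (Fin d) ℝ) i j
        + C i j := by
  intro i j
  set δ : Fin d → Fin d → ℝ := fun a k => if k = a then 1 else 0 with hδ
  set X : Fin d → α → ℝ := fun k ω => (δ i k - B ω k i) * (δ j k - B ω k j) with hX
  -- independence of X k and ν · k
  have hmeasX : ∀ k : Fin d, Measurable
      (fun M : Fin d → Fin d → ℝ => (δ i k - M k i) * (δ j k - M k j)) := by
    intro k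
    have e1 : Measurable (fun M : Fin d → Fin d → ℝ => M k i) :=
      (measurable_pi_apply i).comp (measurable_pi_apply k)
    have e2 : Measurable (fun M : Fin d → Fin d → ℝ => M k j) :=
      (measurable_pi_apply j).comp (measurable_pi_apply k)
    exact (measurable_const.sub e1).mul (measurable_const.sub e2)
  have hind : ∀ k : Fin d, IndepFun (X k) (fun ω => ν ω k) P := by
    intro k
    exact hindep.comp (hmeasX k) (measurable_pi_apply k)
  -- integrability of X k
  have hXeq : ∀ k : Fin d, X k = fun ω =>
      δ i k * δ j k - δ i k * B ω k j - δ j k * B ω k i + B ω k i * B ω k j := by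
    intro k; funext ω; simp only [hX]; ring
  have hXint : ∀ k : Fin d, Integrable (X k) P := by
    intro k
    rw [hXeq k]
    exact (((integrable_const _).sub ((hintB k j).const_mul _)).sub
      ((hintB k i).const_mul _)).add (hintBB i j k)
  -- value of ∫ X k
  have hXval : ∀ k : Fin d, ∫ ω, X k ω ∂P
      = (δ i k - EB k i) * (δ j k - EB k j)
        + ((∫ ω, B ω k i * B ω k j ∂P) - EB k i * EB k j) := by
    intro k
    have h1 : ∫ ω, X k ω ∂P
        = δ i k * δ j k - δ i k * (∫ ω, B ω k j ∂P) - δ j k * (∫ ω, B ω k i ∂P)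
          + ∫ ω, B ω k i * B ω k j ∂P := by
      have := hXeq k
      calc ∫ ω, X k ω ∂P
          = ∫ ω, (δ i k * δ j k - δ i k * B ω k j - δ j k * B ω k i
              + B ω k i * B ω k j) ∂P := by rw [← this]
        _ = _ := by
            have i1 : Integrable (fun ω => δ i k * δ j k - δ i k * B ω k j) P :=
              (integrable_const _).sub ((hintB k j).const_mul _)
            have i2 : Integrable
                (fun ω => δ i k * δ j k - δ i k * B ω k j - δ j k * B ω k i) P :=
              i1.sub ((hintB k i).const_mul _)
            rw [integral_add i2 (hintBB i j k), integral_sub i1 ((hintB k i).const_mul _),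
              integral_sub (integrable_const _) ((hintB k j).const_mul _),
              integral_const_mul, integral_const_mul, integral_const]
            simp [integral_const_mul]
    rw [h1, hEB, hEB]; ring
  -- main computation
  have key : ∫ ω, ((1 - Matrix.of (B ω))ᵀ * Matrix.diagonal (ν ω)
        * (1 - Matrix.of (B ω)) : Matrix (Fin d) (Fin d) ℝ) i j ∂P
      = ∑ k : Fin d, (∫ ω, X k ω ∂P) * Eν k := by
    have h1 : ∀ ω, ((1 - Matrix.of (B ω))ᵀ * Matrix.diagonal (ν ω)
        * (1 - Matrix.of (B ω)) : Matrix (Fin d) (Fin d) ℝ) i j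
        = ∑ k : Fin d, X k ω * ν ω k := by
      intro ω
      exact entry_formula (Matrix.of (B ω)) (ν ω) i j
    simp_rw [h1]
    rw [integral_finset_sum]
    · apply Finset.sum_congr rfl
      intro k _
      have := (hind k).integral_mul_eq_mul_integral (hXint k).aestronglyMeasurable (hintν k).aestronglyMeasurable
      simp only [Pi.mul_apply] at this
      rw [show (fun ω => X k ω * ν ω k) = X k * (fun ω => ν ω k) from rfl] at *
      rw [this, hEν]
    · intro k _
      exact (hind k).integrable_mul (hXint k) (hintν k)
  rw [key]
  -- deterministic side
  have h2 : ((1 - EB)ᵀ * Matrix.diagonal Eν * (1 - EB) : Matrix (Fin d) (Fin d) ℝ) i j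
      = ∑ k : Fin d, ((δ i k - EB k i) * (δ j k - EB k j)) * Eν k :=
    entry_formula EB Eν i j
  -- covariance vanishing off the filter
  have hcovzero : ∀ k : Fin d, ¬ (max i j < k) →
      ((∫ ω, B ω k i * B ω k j ∂P) - EB k i * EB k j) = 0 := by
    intro k hk
    rcases le_max_iff.mp (not_lt.mp hk) with h | h
    · have hz : ∀ ω, B ω k i = 0 := fun ω => hstrict ω k i h
      simp [hz, hEB]
    · have hz : ∀ ω, B ω k j = 0 := fun ω => hstrict ω k j h
      simp [hz, hEB]
  have h3 : C i j = ∑ k : Fin d,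
      ((∫ ω, B ω k i * B ω k j ∂P) - EB k i * EB k j) * Eν k := by
    rw [hC, Finset.sum_filter]
    apply Finset.sum_congr rfl
    intro k _
    by_cases hk : max i j < k
    · simp [hk]
    · simp [hk, hcovzero k hk]
  rw [h2, h3, ← Finset.sum_add_distrib]
  apply Finset.sum_congr rfl
  intro k _
  rw [hXval k]
  ring
end

section
/- The standard half-Cauchy distribution admits the following inverse-gamma scale mixture representation: if λ ~ InvGamma(1/2, 1) and υ² | λ ~ InvGamma(1/2, 1/λ), then the marginal density of υ = √(υ²) on (0,∞) is 2/(π(1+υ²)), i.e., υ ~ C⁺(0,1). -/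
open MeasureTheory

/-- The inverse-gamma density with shape `a` and scale `b`. -/
noncomputable def invGammaDensity (a b x : ℝ) : ℝ :=
  b ^ a / Real.Gamma a * x ^ (-a - 1) * Real.exp (-b / x)

lemma aux_integral (c : ℝ) (hc : 0 < c) :
    ∫ lam in Set.Ioi (0:ℝ), lam ^ (-2:ℝ) * Real.exp (-(c * lam⁻¹)) = 1 / c := by
  have h := integral_comp_rpow_Ioi (fun y => Real.exp (-(c * y))) (p := -1) (by norm_num)
  simp only [abs_neg, abs_one, one_mul, smul_eq_mul] at h
  have h2 : ∫ y in Set.Ioi (0:ℝ), Real.exp (-(c * y)) = 1 / c := by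
    have := Real.integral_rpow_mul_exp_neg_mul_Ioi (a := 1) (r := c) one_pos hc
    simpa using this
  rw [← h2, ← h]
  refine setIntegral_congr_fun measurableSet_Ioi fun x hx => ?_
  rw [show (-1 - 1 : ℝ) = -2 by norm_num, Real.rpow_neg_one]

/-- The half-Cauchy distribution as an inverse-gamma scale mixture:
if `λ ~ InvGamma(1/2, 1)` and `υ² | λ ~ InvGamma(1/2, 1/λ)`, the marginal density of
`υ = √(υ²)` on `(0,∞)` is `2/(π(1+υ²))`, the standard half-Cauchy density. -/
theorem halfCauchy_invGamma_mixture (u : ℝ) (hu : 0 < u) :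
    2 * u * ∫ lam in Set.Ioi (0 : ℝ),
        invGammaDensity (1 / 2) (1 / lam) (u ^ 2) * invGammaDensity (1 / 2) 1 lam
      = 2 / (Real.pi * (1 + u ^ 2)) := by
  set c : ℝ := 1 / u ^ 2 + 1 with hc
  have hcpos : 0 < c := by positivity
  have hu2 : (0:ℝ) < u ^ 2 := by positivity
  have hint : ∫ lam in Set.Ioi (0 : ℝ),
      invGammaDensity (1 / 2) (1 / lam) (u ^ 2) * invGammaDensity (1 / 2) 1 lam
      = u ^ (-3:ℝ) / Real.pi * (1 / c) := by
    rw [← aux_integral c hcpos, ← MeasureTheory.integral_const_mul]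
    refine setIntegral_congr_fun measurableSet_Ioi fun lam hlam => ?_
    have hl : (0:ℝ) < lam := hlam
    unfold invGammaDensity
    rw [Real.Gamma_one_half_eq]
    have e1 : (1 / lam) ^ (1/2 : ℝ) = lam ^ (-(1/2) : ℝ) := by
      rw [one_div, ← Real.rpow_neg_one lam, ← Real.rpow_mul hl.le]
      norm_num
    have e2 : (1:ℝ) ^ (1/2 : ℝ) = 1 := Real.one_rpow _
    have e3 : (u ^ 2 : ℝ) ^ (-(1/2:ℝ) - 1) = u ^ (-3:ℝ) := by
      rw [← Real.rpow_natCast u 2, ← Real.rpow_mul hu.le]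
      norm_num
    have e4 : lam ^ (-(1/2:ℝ)) * lam ^ (-(1/2:ℝ) - 1) = lam ^ (-2:ℝ) := by
      rw [← Real.rpow_add hl]; norm_num
    have e5 : Real.exp (-(1/lam) / u ^ 2) * Real.exp (-1 / lam)
        = Real.exp (-(c * lam⁻¹)) := by
      rw [← Real.exp_add]
      congr 1
      field_simp [hc]
      rw [hc, mul_add, mul_one_div_cancel hu2.ne']
      ring
    rw [e1, e2, e3]
    have hpi : Real.sqrt Real.pi ≠ 0 := by positivity
    rw [show (-(1/2:ℝ)) = 1/2 * (-1) by norm_num] at *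
    calc lam ^ ((1:ℝ)/2 * -1) / Real.sqrt Real.pi * u ^ (-3:ℝ) *
          Real.exp (-(1 / lam) / u ^ 2) *
          (1 / Real.sqrt Real.pi * lam ^ ((1:ℝ)/2 * -1 - 1) * Real.exp (-1 / lam))
        = u ^ (-3:ℝ) / (Real.sqrt Real.pi * Real.sqrt Real.pi) *
          ((lam ^ ((1:ℝ)/2 * -1) * lam ^ ((1:ℝ)/2 * -1 - 1)) *
            (Real.exp (-(1/lam) / u ^ 2) * Real.exp (-1 / lam))) := by ring
      _ = u ^ (-3:ℝ) / Real.pi * (lam ^ (-2:ℝ) * Real.exp (-(c * lam⁻¹))) := by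
          rw [Real.mul_self_sqrt Real.pi_pos.le, e4, e5]
  rw [hint]
  have hu3 : u ^ (-3:ℝ) = (u ^ 3)⁻¹ := by
    rw [← Real.rpow_natCast u 3, ← Real.rpow_neg hu.le]; norm_num
  rw [hu3, hc]
  have hpi := Real.pi_ne_zero
  field_simp
end
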